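/- arXiv:0806.2546 — 2 statements merged into one kernel-verified Lean document; each statement's English description precedes it below -/
import Mathlib

section
/- For a multi-index β ∈ ℕ^n and the coefficients a_{2γ} = (−1)^{|γ|}/(γ! 4^{|γ|}) (a_δ = 0 if δ has an odd component), one has the identity ∑_{α ≤ β} (a_{β−α}/α!) x^α = (1/(β! 2^{|β|})) H_β(x), where H_β is the n-dimensional Hermite polynomial. -/
open scoped BigOperators
open MeasureTheory

noncomputable def pd {n : ℕ} (i : Fin n) (f : (Fin n → ℝ) → ℝ) : (Fin n → ℝ) → ℝ :=
  fun x => fderiv ℝ f x (Pi.single i 1)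

noncomputable def mderiv {n : ℕ} (α : Fin n → ℕ) (f : (Fin n → ℝ) → ℝ) : (Fin n → ℝ) → ℝ :=
  ((List.ofFn fun i : Fin n => (pd i)^[α i]).foldr (· ∘ ·) id) f

def mfact {n : ℕ} (α : Fin n → ℕ) : ℕ := ∏ i, (α i).factorial

def msize {n : ℕ} (α : Fin n → ℕ) : ℕ := ∑ i, α i

def mpow {n : ℕ} (x : Fin n → ℝ) (α : Fin n → ℕ) : ℝ := ∏ i, x i ^ α i

/-- Physicists' Hermite polynomial `H_k(x) = (−1)^k e^{x²} (d/dx)^k e^{-x²}`. -/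
noncomputable def Hphys (k : ℕ) (x : ℝ) : ℝ :=
  (-1 : ℝ) ^ k * Real.exp (x ^ 2) * iteratedDeriv k (fun t => Real.exp (-t ^ 2)) x

/-- The coefficients `a_{2γ} = (−1)^{|γ|}/(γ! 4^{|γ|})`, and `a_δ = 0` if `δ` has an
odd component. -/
noncomputable def aa {n : ℕ} (δ : Fin n → ℕ) : ℝ :=
  if ∀ i, Even (δ i) then
    (-1 : ℝ) ^ (∑ i, δ i / 2) /
      ((mfact (fun i => δ i / 2) : ℝ) * 4 ^ (∑ i, δ i / 2))
  else 0

noncomputable def a1 (k : ℕ) : ℝ :=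
  if Even k then (-1 : ℝ) ^ (k / 2) / ((k / 2).factorial * 4 ^ (k / 2)) else 0

lemma a1_zero : a1 0 = 1 := by simp [a1]

lemma a1_one : a1 1 = 0 := by simp [a1]

lemma a1_odd {k : ℕ} (h : ¬ Even k) : a1 k = 0 := by simp [a1, h]

lemma a1_rec (m : ℕ) : a1 m = -(2 * ((m : ℝ) + 2) * a1 (m + 2)) := by
  rcases Nat.even_or_odd m with he | ho
  · obtain ⟨j, rfl⟩ := he
    have h1 : Even (j + j) := ⟨j, rfl⟩
    have h2 : Even (j + j + 2) := ⟨j + 1, by ring⟩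
    have e1 : (j + j) / 2 = j := by omega
    have e2 : (j + j + 2) / 2 = j + 1 := by omega
    rw [a1, a1, if_pos h1, if_pos h2, e1, e2, pow_succ, pow_succ, Nat.factorial_succ]
    have hf : (j.factorial : ℝ) ≠ 0 := Nat.cast_ne_zero.mpr j.factorial_ne_zero
    have h4 : (4 : ℝ) ^ j ≠ 0 := by positivity
    push_cast
    field_simp
    ring
  · have h1 : ¬ Even m := Nat.not_even_iff_odd.mpr ho
    have h2 : ¬ Even (m + 2) := by
      rw [Nat.even_add]; simpa using h1
    rw [a1_odd h1, a1_odd h2]; ring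

noncomputable def PH : ℕ → Polynomial ℝ
  | 0 => 1
  | k + 1 => Polynomial.C 2 * (Polynomial.X * PH k) - Polynomial.derivative (PH k)

noncomputable def cc (k a : ℕ) : ℝ :=
  if a ≤ k then (k.factorial : ℝ) * 2 ^ k * a1 (k - a) / a.factorial else 0

lemma coeff_PH (k a : ℕ) : (PH k).coeff a = cc k a := by
  induction k generalizing a with
  | zero =>
    rcases Nat.eq_zero_or_pos a with rfl | ha
    · simp [PH, cc, a1_zero]
    · rw [show (PH 0) = 1 from rfl, Polynomial.coeff_one, cc, if_neg (by omega)]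
      simp [Nat.pos_iff_ne_zero.mp ha]
  | succ k ih =>
    have fne : ∀ m : ℕ, (m.factorial : ℝ) ≠ 0 := fun m => Nat.cast_ne_zero.mpr m.factorial_ne_zero
    cases a with
    | zero =>
      rw [show PH (k+1) = Polynomial.C 2 * (Polynomial.X * PH k) - Polynomial.derivative (PH k) from rfl]
      rw [Polynomial.coeff_sub, Polynomial.coeff_C_mul, Polynomial.coeff_derivative, ih]
      simp only [Polynomial.mul_coeff_zero, Polynomial.coeff_X_zero, zero_mul, mul_zero, zero_sub]
      rcases Nat.eq_zero_or_pos k with rfl | hk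
      · simp [cc, a1_one]
      · obtain ⟨m, rfl⟩ : ∃ m, k = m + 1 := ⟨k - 1, by omega⟩
        rw [cc, cc, if_pos (by omega), if_pos (by omega)]
        have : a1 (m + 1 + 1 - 0) = a1 (m + 2) := by norm_num
        rw [this, show m + 1 - 1 = m from rfl, a1_rec m, Nat.factorial_succ (m+1), pow_succ]
        push_cast
        field_simp
        ring
    | succ b =>
      rw [show PH (k+1) = Polynomial.C 2 * (Polynomial.X * PH k) - Polynomial.derivative (PH k) from rfl]
      rw [Polynomial.coeff_sub, Polynomial.coeff_C_mul, Polynomial.coeff_X_mul,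
        Polynomial.coeff_derivative, ih, ih]
      by_cases hbk : b ≤ k
      · by_cases h2 : b + 2 ≤ k
        · obtain ⟨m, rfl⟩ : ∃ m, k = b + m + 2 := ⟨k - b - 2, by omega⟩
          rw [cc, cc, cc, if_pos (by omega), if_pos (by omega), if_pos (by omega)]
          rw [show b + m + 2 - b = m + 2 from by omega,
              show b + m + 2 + 1 - (b + 1) = m + 2 from by omega,
              show b + m + 2 - (b + 2) = m from by omega]
          rw [a1_rec m]
          rw [show (b + m + 2 + 1).factorial = (b+m+3) * (b+m+2).factorial from by
                rw [show b+m+2+1 = b+m+3 from rfl, Nat.factorial_succ],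
              show (b + 2).factorial = (b+2) * ((b+1) * b.factorial) from by
                rw [Nat.factorial_succ, Nat.factorial_succ],
              show (b + 1).factorial = (b+1) * b.factorial from Nat.factorial_succ b,
              show (2:ℝ)^(b+m+2+1) = 2 * 2^(b+m+2) from by rw [pow_succ]; ring]
          push_cast
          field_simp
          ring
        · have hk : k = b ∨ k = b + 1 := by omega
          rcases hk with hk | hk
          · -- k = b
            rw [cc, cc, cc, if_pos (by omega), if_neg (by omega), if_pos (by omega),
              show k + 1 - (b + 1) = 0 from by omega, show k - b = 0 from by omega, a1_zero, hk,
              Nat.factorial_succ, pow_succ]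
            push_cast
            field_simp
            ring
          · -- k = b + 1
            rw [cc, cc, cc, if_pos (by omega), if_neg (by omega), if_pos (by omega),
              show k + 1 - (b + 1) = 1 from by omega, show k - b = 1 from by omega, a1_one]
            ring
      · rw [cc, cc, cc, if_neg (by omega), if_neg (by omega), if_neg (by omega)]
        ring

lemma iter_deriv_gauss (k : ℕ) (x : ℝ) :
    iteratedDeriv k (fun t => Real.exp (-t ^ 2)) x
      = (-1 : ℝ) ^ k * Real.exp (-x ^ 2) * (PH k).eval x := by
  induction k generalizing x with
  | zero => simp [PH]
  | succ k ih =>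
    rw [iteratedDeriv_succ, funext ih]
    have h1 : HasDerivAt (fun x : ℝ => Real.exp (-x ^ 2)) (Real.exp (-x ^ 2) * (-(2 * x))) x := by
      have hp : HasDerivAt (fun x : ℝ => -x ^ 2) (-(2 * x)) x := by
        simpa using (show HasDerivAt (fun x : ℝ => -x ^ 2) (-(((2:ℕ):ℝ) * x ^ (2 - 1))) x from (hasDerivAt_pow 2 x).neg)
      exact hp.exp
    have H : HasDerivAt (fun x : ℝ => (-1 : ℝ) ^ k * Real.exp (-x ^ 2) * (PH k).eval x)
        ((-1 : ℝ) ^ k * (Real.exp (-x ^ 2) * (-(2 * x)) * (PH k).eval x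
          + Real.exp (-x ^ 2) * ((Polynomial.derivative (PH k)).eval x))) x := by
      simpa [mul_assoc] using (h1.mul (Polynomial.hasDerivAt (PH k) x)).const_mul ((-1 : ℝ) ^ k)
    rw [H.deriv]
    rw [show PH (k + 1) = Polynomial.C 2 * (Polynomial.X * PH k) - Polynomial.derivative (PH k)
        from rfl]
    simp only [Polynomial.eval_sub, Polynomial.eval_mul, Polynomial.eval_C, Polynomial.eval_X,
      pow_succ]
    ring

lemma Hphys_eq (k : ℕ) (x : ℝ) : Hphys k x = (PH k).eval x := by
  rw [Hphys, iter_deriv_gauss]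
  have h1 : Real.exp (x ^ 2) * Real.exp (-x ^ 2) = 1 := by
    rw [← Real.exp_add]; simp
  have h2 : ((-1 : ℝ) ^ k) * ((-1 : ℝ) ^ k) = 1 := by
    rw [← mul_pow]; norm_num
  calc (-1 : ℝ) ^ k * Real.exp (x ^ 2) * ((-1 : ℝ) ^ k * Real.exp (-x ^ 2) * (PH k).eval x)
      = (((-1 : ℝ) ^ k) * ((-1 : ℝ) ^ k)) * (Real.exp (x ^ 2) * Real.exp (-x ^ 2))
          * (PH k).eval x := by ring
    _ = (PH k).eval x := by rw [h1, h2]; ring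

lemma natDegree_PH_le (k : ℕ) : (PH k).natDegree ≤ k :=
  Polynomial.natDegree_le_iff_coeff_eq_zero.mpr fun N hN => by
    rw [coeff_PH, cc, if_neg (by omega)]

lemma sum1 (k : ℕ) (x : ℝ) :
    ∑ a ∈ Finset.Iic k, a1 (k - a) / (a.factorial : ℝ) * x ^ a
      = 1 / ((k.factorial : ℝ) * 2 ^ k) * Hphys k x := by
  rw [Hphys_eq, Polynomial.eval_eq_sum_range' (Nat.lt_succ_of_le (natDegree_PH_le k)) x]
  have hIic : Finset.Iic k = Finset.range (k + 1) := by
    ext a; simp [Nat.lt_succ_iff]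
  rw [hIic, Finset.mul_sum]
  refine Finset.sum_congr rfl fun a ha => ?_
  rw [coeff_PH, cc, if_pos (Nat.lt_succ_iff.mp (Finset.mem_range.mp ha))]
  have h1 : (k.factorial : ℝ) ≠ 0 := Nat.cast_ne_zero.mpr k.factorial_ne_zero
  have h2 : (a.factorial : ℝ) ≠ 0 := Nat.cast_ne_zero.mpr a.factorial_ne_zero
  have h3 : (2 : ℝ) ^ k ≠ 0 := by positivity
  field_simp

lemma aa_eq_prod {n : ℕ} (δ : Fin n → ℕ) : aa δ = ∏ i, a1 (δ i) := by
  by_cases h : ∀ i, Even (δ i)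
  · have hc : ∀ i ∈ Finset.univ, a1 (δ i)
        = (-1 : ℝ) ^ (δ i / 2) / ((δ i / 2).factorial * 4 ^ (δ i / 2)) := fun i _ => by
      simp only [a1, if_pos (h i)]
    rw [aa, if_pos h, Finset.prod_congr rfl hc]
    rw [Finset.prod_div_distrib, Finset.prod_pow_eq_pow_sum, Finset.prod_mul_distrib,
      Finset.prod_pow_eq_pow_sum, mfact]
    push_cast
    ring
  · rw [aa, if_neg h]
    push_neg at h
    obtain ⟨i, hi⟩ := h
    exact (Finset.prod_eq_zero (Finset.mem_univ i) (by simp [a1, hi])).symm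

theorem coeff_sum_eq_hermite (n : ℕ) (β : Fin n → ℕ) (x : Fin n → ℝ) :
    ∑ α ∈ Finset.Iic β, (aa (β - α) / (mfact α : ℝ)) * mpow x α
      = (1 / ((mfact β : ℝ) * 2 ^ msize β)) * ∏ j, Hphys (β j) (x j) := by
  have hIic : Finset.Iic β = Fintype.piFinset fun i => Finset.Iic (β i) := rfl
  have hterm : ∀ α ∈ Fintype.piFinset fun i => Finset.Iic (β i),
      (aa (β - α) / (mfact α : ℝ)) * mpow x α
        = ∏ i, a1 (β i - α i) / ((α i).factorial : ℝ) * x i ^ α i := by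
    intro α _
    rw [aa_eq_prod, mfact, mpow, Nat.cast_prod, ← Finset.prod_div_distrib,
      ← Finset.prod_mul_distrib]
    exact Finset.prod_congr rfl fun i _ => by rw [Pi.sub_apply]
  rw [hIic, Finset.sum_congr rfl hterm, ← Finset.prod_univ_sum (fun i => Finset.Iic (β i))
    (fun i a => a1 (β i - a) / ((a.factorial : ℝ)) * x i ^ a)]
  have : ∀ i, ∑ a ∈ Finset.Iic (β i), a1 (β i - a) / ((a.factorial : ℝ)) * x i ^ a
      = 1 / (((β i).factorial : ℝ) * 2 ^ β i) * Hphys (β i) (x i) := fun i => sum1 (β i) (x i)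
  rw [Finset.prod_congr rfl fun i _ => this i, Finset.prod_mul_distrib]
  rw [mfact, msize]
  push_cast
  rw [Finset.prod_div_distrib, ← Finset.prod_pow_eq_pow_sum, Finset.prod_mul_distrib]
  simp
end

section
/- For every natural number k ≥ 2, Γ((k+1)/2) ≤ (π^{1/4}/2^{k/2}) √(k!). -/
theorem gamma_factorial_bound (k : ℕ) (hk : 2 ≤ k) :
    Real.Gamma (((k : ℝ) + 1) / 2)
      ≤ Real.pi ^ ((1 : ℝ) / 4) / 2 ^ ((k : ℝ) / 2) * Real.sqrt k.factorial := by
  set s : ℝ := ((k : ℝ) + 1) / 2 with hs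
  have hs15 : (3:ℝ)/2 ≤ s := by
    have : (2:ℝ) ≤ k := by exact_mod_cast hk
    rw [hs]; linarith
  have hspos : 0 < s := by linarith
  have hΓpos := Real.Gamma_pos_of_pos hspos
  -- monotonicity step
  have hmono : Real.Gamma s ≤ Real.Gamma (s + 1/2) := by
    rcases eq_or_lt_of_le hk with h2 | h3
    · have : s = 3/2 := by rw [hs, ← h2]; norm_num
      rw [this, (by norm_num : (3:ℝ)/2 + 1/2 = 2), Real.Gamma_two]
      exact le_of_lt Real.Gamma_three_div_two_lt_one
    · have hk3 : (3:ℕ) ≤ k := h3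
      have h2s : (2:ℝ) ≤ s := by
        have : (3:ℝ) ≤ k := by exact_mod_cast hk3
        rw [hs]; linarith
      exact Real.Gamma_strictMonoOn_Ici.monotoneOn h2s (by linarith : (2:ℝ) ≤ s + 1/2)
        (by linarith)
  have hdup := Real.Gamma_mul_Gamma_add_half s
  have h2s : 2 * s = (k:ℝ) + 1 := by rw [hs]; ring
  have hfact : Real.Gamma (2 * s) = k.factorial := by
    rw [h2s]; exact_mod_cast Real.Gamma_nat_eq_factorial k
  have hsq : Real.Gamma s ^ 2 ≤ (k.factorial : ℝ) * (2:ℝ) ^ (-(k:ℝ)) * Real.sqrt Real.pi := by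
    calc Real.Gamma s ^ 2 = Real.Gamma s * Real.Gamma s := sq (Real.Gamma s)
      _ ≤ Real.Gamma s * Real.Gamma (s + 1/2) := by
          exact mul_le_mul_of_nonneg_left hmono hΓpos.le
      _ = (k.factorial : ℝ) * (2:ℝ) ^ (-(k:ℝ)) * Real.sqrt Real.pi := by
          rw [hdup, hfact, h2s]; ring_nf
  -- take square roots
  have hrhs : Real.pi ^ ((1:ℝ)/4) / 2 ^ ((k:ℝ)/2) * Real.sqrt k.factorial
      = Real.sqrt ((k.factorial : ℝ) * (2:ℝ) ^ (-(k:ℝ)) * Real.sqrt Real.pi) := by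
    rw [Real.sqrt_mul (by positivity), Real.sqrt_mul (by positivity),
      Real.sqrt_eq_rpow ((2:ℝ) ^ (-(k:ℝ))), Real.sqrt_eq_rpow Real.pi,
      Real.sqrt_eq_rpow (Real.pi ^ ((1:ℝ)/2)),
      ← Real.rpow_mul Real.pi_pos.le, ← Real.rpow_mul (by norm_num : (0:ℝ) ≤ 2),
      (show -(k:ℝ) * (1/2) = -((k:ℝ)/2) by ring),
      Real.rpow_neg (by norm_num : (0:ℝ) ≤ 2),
      (show (1:ℝ)/2 * (1/2) = 1/4 by norm_num), div_eq_mul_inv]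
    ring
  rw [hrhs]
  exact (Real.le_sqrt' hΓpos).mpr hsq
end
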